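/- For every symmetric 4×4 matrix X over a commutative ring, det X_{{1,2},{2,4}} · det X_{{2,4},{3,4}} − det X_{{1,3},{2,4}} · det X_{{2,4},{2,4}} + det X_{{1,4},{2,4}} · det X_{{2,3},{2,4}} = 0. -/

import Mathlib

open Matrix

/-- For every symmetric 4×4 matrix `X` over a commutative ring,
`det X_{{1,2},{2,4}} · det X_{{2,4},{3,4}} − det X_{{1,3},{2,4}} · det X_{{2,4},{2,4}}
 + det X_{{1,4},{2,4}} · det X_{{2,3},{2,4}} = 0`. -/
theorem degree_020_relation {R : Type*} [CommRing R]
    (X : Matrix (Fin 4) (Fin 4) R) (hX : X.IsSymm) :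
    (X.submatrix ![0, 1] ![1, 3]).det * (X.submatrix ![1, 3] ![2, 3]).det
      - (X.submatrix ![0, 2] ![1, 3]).det * (X.submatrix ![1, 3] ![1, 3]).det
      + (X.submatrix ![0, 3] ![1, 3]).det * (X.submatrix ![1, 2] ![1, 3]).det = 0 := by
  have h : ∀ i j : Fin 4, X j i = X i j := fun i j => hX.apply i j
  simp only [Matrix.det_fin_two]
  simp [Matrix.det_fin_two, h 1 2, h 1 3, h 2 3, h 0 1, h 0 2, h 0 3]
  ring
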